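/- Let ℓ ≥ 1, let 0 < α_ℓ < ⋯ < α₂ < α₁ ≤ 1, let q_i : [0,T] → ℝ be continuous with q_i(t) ≥ 0 and Σᵢ q_i(t) > 0 for all t, and let λ ≥ 0. Suppose w : [0,T] → ℝ is continuous, Lipschitz on every interval [ε,t] with 0 < ε < t ≤ T, and satisfies Σᵢ q_i(t) D_t^{α_i} w(t) + λ w(t) = v(t) for 0 < t ≤ T, where v(t) ≥ 0 for all t and w(0) ≥ 0, with D_t^{α_i} w defined by the reformulated Caputo derivative (and D_t^{α₁} w = w′ if α₁ = 1, assumed left-continuous). Then w(t) ≥ 0 for all t ∈ [0,T]. -/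

import Mathlib

open MeasureTheory Set intervalIntegral

/-- Reformulated Caputo derivative of order `α ∈ (0,1)` at time `t`. -/
noncomputable def caputoR (α : ℝ) (w : ℝ → ℝ) (t : ℝ) : ℝ :=
  (1 / Real.Gamma (1 - α)) *
    (t ^ (-α) * (w t - w 0)
      + ∫ s in (0:ℝ)..t, α * (t - s) ^ (-α - 1) * (w t - w s))

/-- Caputo derivative of order `α ∈ (0,1]`: reformulated Caputo derivative for
`α < 1`, ordinary derivative for `α = 1`. -/
noncomputable def caputoD (α : ℝ) (w : ℝ → ℝ) (t : ℝ) : ℝ :=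
  if α = 1 then deriv w t else caputoR α w t

section Aux

open Filter

lemma abs_deriv_le_of_lipschitz {C : NNReal} {f : ℝ → ℝ} (hf : LipschitzWith C f) (x : ℝ) :
    |deriv f x| ≤ C := by
  by_cases hd : DifferentiableAt ℝ f x
  · have h1 : Tendsto (slope f x) (nhdsWithin x {x}ᶜ) (nhds (deriv f x)) :=
      hasDerivAt_iff_tendsto_slope.1 hd.hasDerivAt
    have h2 : ∀ᶠ y in nhdsWithin x {x}ᶜ, slope f x y ∈ Icc (-(C : ℝ)) C := by
      filter_upwards [self_mem_nhdsWithin] with y hy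
      have hxy : y ≠ x := hy
      have hdist := hf.dist_le_mul y x
      rw [Real.dist_eq, Real.dist_eq] at hdist
      have habs : |slope f x y| ≤ C := by
        rw [slope_def_field, abs_div]
        rw [div_le_iff₀ (abs_pos.2 (sub_ne_zero.2 hxy))]
        exact hdist
      exact abs_le.1 habs
    exact abs_le.2 (isClosed_Icc.mem_of_tendsto h1 h2)
  · simp [deriv_zero_of_not_differentiableAt hd]

lemma deriv_nonneg_of_monotone {f : ℝ → ℝ} (hf : Monotone f) (x : ℝ) : 0 ≤ deriv f x := by
  by_cases hd : DifferentiableAt ℝ f x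
  · have h1 : Tendsto (slope f x) (nhdsWithin x {x}ᶜ) (nhds (deriv f x)) :=
      hasDerivAt_iff_tendsto_slope.1 hd.hasDerivAt
    have h2 : ∀ᶠ y in nhdsWithin x {x}ᶜ, 0 ≤ slope f x y := by
      filter_upwards [self_mem_nhdsWithin] with y hy
      have hxy : y ≠ x := hy
      rw [slope_def_field]
      rcases lt_or_gt_of_ne hxy with h | h
      · exact div_nonneg_of_nonpos (by simpa using hf h.le) (by linarith)
      · exact div_nonneg (by simpa using hf h.le) (by linarith)
    exact ge_of_tendsto h1 h2
  · simp [deriv_zero_of_not_differentiableAt hd]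

lemma deriv_le_neg_of_min {f : ℝ → ℝ} {t₀ ε : ℝ} (ht₀ : 0 < t₀)
    (hd : DifferentiableAt ℝ f t₀)
    (h : ∀ s ∈ Icc 0 t₀, f t₀ + ε * (t₀ - s) ≤ f s) : deriv f t₀ ≤ -ε := by
  have h1 : Tendsto (slope f t₀) (nhdsWithin t₀ (Iio t₀)) (nhds (deriv f t₀)) :=
    (hasDerivAt_iff_tendsto_slope.1 hd.hasDerivAt).mono_left
      (nhdsWithin_mono _ (fun y hy => ne_of_lt hy))
  have h2 : ∀ᶠ y in nhdsWithin t₀ (Iio t₀), slope f t₀ y ≤ -ε := by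
    filter_upwards [self_mem_nhdsWithin,
      mem_nhdsWithin_of_mem_nhds (Ioi_mem_nhds ht₀)] with y hy hy0
    have hy' : y < t₀ := hy
    have hy0' : (0:ℝ) < y := hy0
    have hkey := h y ⟨hy0'.le, hy'.le⟩
    rw [slope_def_field, div_le_iff_of_neg (by linarith : y - t₀ < 0)]
    nlinarith
  exact le_of_tendsto h1 h2

lemma integral_deriv_le_of_monotone_lipschitz {C : NNReal} {k : ℝ → ℝ} {a b : ℝ}
    (hk : Monotone k) (hl : LipschitzWith C k) (hab : a ≤ b) :
    ∫ s in a..b, deriv k s ≤ k b - k a := by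
  have hcont : Continuous k := hl.continuous
  have hmeas : Measurable (deriv k) := measurable_deriv k
  have hnn : ∀ x, 0 ≤ deriv k x := deriv_nonneg_of_monotone hk
  have hbd : ∀ x, |deriv k x| ≤ C := abs_deriv_le_of_lipschitz hl
  haveI : IsFiniteMeasure (volume.restrict (Ioc a b)) :=
    ⟨by rw [Measure.restrict_apply_univ]; exact measure_Ioc_lt_top⟩
  have hint : IntegrableOn (deriv k) (Ioc a b) volume := by
    refine Integrable.mono' (integrable_const (C : ℝ)) hmeas.aestronglyMeasurable ?_
    exact Eventually.of_forall (fun x => by simpa [Real.norm_eq_abs] using hbd x)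
  set h : ℕ → ℝ := fun n => 1 / (n + 1) with hh
  have hhpos : ∀ n, 0 < h n := fun n => by positivity
  set F : ℕ → ℝ → ℝ := fun n x => (k (x + h n) - k x) * (n + 1) with hF
  have hFcont : ∀ n, Continuous (F n) := fun n =>
    ((hcont.comp (continuous_id.add continuous_const)).sub hcont).mul continuous_const
  have hFnn : ∀ n x, 0 ≤ F n x := fun n x =>
    mul_nonneg (sub_nonneg.2 (hk (by linarith [hhpos n]))) (by positivity)
  have htends : ∀ x, DifferentiableAt ℝ k x →
      Tendsto (fun n => F n x) atTop (nhds (deriv k x)) := by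
    intro x hd
    have h1 : Tendsto (slope k x) (nhdsWithin x {x}ᶜ) (nhds (deriv k x)) :=
      hasDerivAt_iff_tendsto_slope.1 hd.hasDerivAt
    have h2 : Tendsto (fun n => x + h n) atTop (nhdsWithin x {x}ᶜ) := by
      rw [tendsto_nhdsWithin_iff]
      constructor
      · have : Tendsto (fun n : ℕ => x + 1/((n:ℝ)+1)) atTop (nhds (x + 0)) :=
          tendsto_const_nhds.add tendsto_one_div_add_atTop_nhds_zero_nat
        simpa [hh] using this
      · exact Eventually.of_forall fun n => by
          have := hhpos n
          simp only [mem_compl_iff, mem_singleton_iff]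
          intro hcontra
          nlinarith [congrArg (fun z => z - x) hcontra]
    have h3 := h1.comp h2
    have h4 : (fun n => F n x) = (slope k x) ∘ (fun n => x + h n) := by
      funext n
      simp only [Function.comp_apply, slope_def_field, hF]
      rw [add_sub_cancel_left, hh]
      field_simp
    rw [h4]
    exact h3
  have hae : ∀ᵐ x ∂(volume.restrict (Ioc a b)),
      ENNReal.ofReal (deriv k x) ≤ liminf (fun n => ENNReal.ofReal (F n x)) atTop := by
    refine ae_restrict_of_ae ?_
    filter_upwards [hl.ae_differentiableAt (μ := volume)] with x hx
    rw [(ENNReal.tendsto_ofReal (htends x hx)).liminf_eq]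
  have fatou := lintegral_liminf_le (μ := volume.restrict (Ioc a b)) (u := atTop)
    (fun n => ENNReal.measurable_ofReal.comp (hFcont n).measurable)
  have step1 : ∫⁻ x in Ioc a b, ENNReal.ofReal (deriv k x) ≤
      liminf (fun n => ∫⁻ x in Ioc a b, ENNReal.ofReal (F n x)) atTop :=
    le_trans (lintegral_mono_ae hae) fatou
  have hFbound : ∀ n, ∫⁻ x in Ioc a b, ENNReal.ofReal (F n x) ≤
      ENNReal.ofReal (k (b + h n) - k a) := by
    intro n
    have hFint : IntegrableOn (F n) (Ioc a b) volume := (hFcont n).integrableOn_Ioc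
    rw [← ofReal_integral_eq_lintegral_ofReal hFint (Eventually.of_forall fun x => hFnn n x)]
    apply ENNReal.ofReal_le_ofReal
    have e1 : ∫ x in Ioc a b, F n x = ∫ x in a..b, F n x := (integral_of_le hab).symm
    rw [e1]
    have hki : ∀ c d : ℝ, IntervalIntegrable k volume c d := fun c d => hcont.intervalIntegrable c d
    have hks : IntervalIntegrable (fun x => k (x + h n)) volume a b :=
      (hcont.comp (continuous_id.add continuous_const)).intervalIntegrable a b
    have e2 : ∫ x in a..b, F n x
        = ((∫ x in a..b, k (x + h n)) - ∫ x in a..b, k x) * (n + 1) := by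
      rw [hF]
      rw [intervalIntegral.integral_mul_const, intervalIntegral.integral_sub hks (hki a b)]
    have e3 : ∫ x in a..b, k (x + h n) = ∫ x in (a + h n)..(b + h n), k x :=
      intervalIntegral.integral_comp_add_right k (h n)
    have hadd1 : (∫ x in a..(a + h n), k x) + ∫ x in (a + h n)..(b + h n), k x
        = ∫ x in a..(b + h n), k x :=
      integral_add_adjacent_intervals (hki _ _) (hki _ _)
    have hadd2 : (∫ x in a..b, k x) + ∫ x in b..(b + h n), k x = ∫ x in a..(b + h n), k x :=
      integral_add_adjacent_intervals (hki _ _) (hki _ _)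
    have hb1 : ∫ x in b..(b + h n), k x ≤ h n * k (b + h n) := by
      have := intervalIntegral.integral_mono_on (by linarith [hhpos n] : b ≤ b + h n)
        (hki b (b + h n)) intervalIntegrable_const
        (fun x hx => hk hx.2)
      simpa [smul_eq_mul, mul_comm] using this
    have hb2 : h n * k a ≤ ∫ x in a..(a + h n), k x := by
      have := intervalIntegral.integral_mono_on (by linarith [hhpos n] : a ≤ a + h n)
        intervalIntegrable_const (hki a (a + h n))
        (fun x hx => hk hx.1)
      simpa [smul_eq_mul, mul_comm] using this
    have hinv : h n * (n + 1) = 1 := by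
      rw [hh]; field_simp
    have hdiff : (∫ x in a..b, k (x + h n)) - ∫ x in a..b, k x
        = (∫ x in b..(b + h n), k x) - ∫ x in a..(a + h n), k x := by
      rw [e3]; linarith [hadd1, hadd2]
    calc ∫ x in a..b, F n x
        = ((∫ x in b..(b + h n), k x) - ∫ x in a..(a + h n), k x) * (n + 1) := by
          rw [e2, hdiff]
      _ ≤ (h n * k (b + h n) - h n * k a) * (n + 1) := by
          have hn1 : (0:ℝ) ≤ (n:ℝ) + 1 := by positivity
          apply mul_le_mul_of_nonneg_right _ hn1
          linarith
      _ = k (b + h n) - k a := by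
          have e4 : (h n * k (b + h n) - h n * k a) * (n + 1)
              = (h n * (n + 1)) * (k (b + h n) - k a) := by ring
          rw [e4, hinv, one_mul]
  have hlim : liminf (fun n => ∫⁻ x in Ioc a b, ENNReal.ofReal (F n x)) atTop ≤
      ENNReal.ofReal (k b - k a) := by
    have hbh : Tendsto (fun n => b + h n) atTop (nhds b) := by
      have : Tendsto (fun n : ℕ => b + 1/((n:ℝ)+1)) atTop (nhds (b + 0)) :=
        tendsto_const_nhds.add tendsto_one_div_add_atTop_nhds_zero_nat
      simpa [hh] using this
    have h1 : Tendsto (fun n => ENNReal.ofReal (k (b + h n) - k a)) atTop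
        (nhds (ENNReal.ofReal (k b - k a))) :=
      ENNReal.tendsto_ofReal (((hcont.tendsto b).comp hbh).sub tendsto_const_nhds)
    calc liminf (fun n => ∫⁻ x in Ioc a b, ENNReal.ofReal (F n x)) atTop
        ≤ liminf (fun n => ENNReal.ofReal (k (b + h n) - k a)) atTop :=
          liminf_le_liminf (Eventually.of_forall hFbound)
      _ = ENNReal.ofReal (k b - k a) := h1.liminf_eq
  have hfinal : ENNReal.ofReal (∫ x in Ioc a b, deriv k x) ≤ ENNReal.ofReal (k b - k a) := by
    rw [ofReal_integral_eq_lintegral_ofReal hint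
      (ae_restrict_of_ae (Eventually.of_forall hnn))]
    exact le_trans step1 hlim
  rw [integral_of_le hab]
  exact (ENNReal.ofReal_le_ofReal_iff (sub_nonneg.2 (hk hab))).1 hfinal

lemma intervalIntegrable_deriv_of_lipschitz {C : NNReal} {g : ℝ → ℝ}
    (hg : LipschitzWith C g) (a b : ℝ) : IntervalIntegrable (deriv g) volume a b := by
  rw [intervalIntegrable_iff]
  haveI : IsFiniteMeasure (volume.restrict (Set.uIoc a b)) :=
    ⟨by rw [Measure.restrict_apply_univ]; exact measure_Ioc_lt_top⟩
  refine Integrable.mono' (integrable_const (C : ℝ))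
    (measurable_deriv g).aestronglyMeasurable ?_
  exact Eventually.of_forall fun x => by
    simpa [Real.norm_eq_abs] using abs_deriv_le_of_lipschitz hg x

lemma integral_deriv_le_of_lipschitz {C : NNReal} {g : ℝ → ℝ}
    (hg : LipschitzWith C g) {a b : ℝ} (hab : a ≤ b) :
    ∫ s in a..b, deriv g s ≤ g b - g a := by
  set k : ℝ → ℝ := fun t => (C : ℝ) * t + g t with hkdef
  have hCl : LipschitzWith C (fun t : ℝ => (C : ℝ) * t) :=
    LipschitzWith.of_dist_le_mul fun x y => by
      rw [Real.dist_eq, Real.dist_eq, ← mul_sub, abs_mul, abs_of_nonneg C.coe_nonneg]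
  have hkl : LipschitzWith (C + C) k := hCl.add hg
  have hkm : Monotone k := by
    intro x y hxy
    have h1 := hg.dist_le_mul x y
    rw [Real.dist_eq, Real.dist_eq] at h1
    have h3 : |x - y| = y - x := by rw [abs_sub_comm]; exact abs_of_nonneg (by linarith)
    rw [h3] at h1
    have h2 := abs_le.1 h1
    simp only [hkdef]
    linarith [h2.1, h2.2]
  have hmain := integral_deriv_le_of_monotone_lipschitz hkm hkl hab
  have hae : ∀ᵐ x ∂volume, x ∈ Set.uIoc a b → deriv k x = (C : ℝ) + deriv g x := by
    filter_upwards [hg.ae_differentiableAt (μ := volume)] with x hx _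
    have h1 : HasDerivAt (fun t : ℝ => (C : ℝ) * t) (C : ℝ) x := by
      simpa using (hasDerivAt_id x).const_mul (C : ℝ)
    exact (h1.add hx.hasDerivAt).deriv
  rw [intervalIntegral.integral_congr_ae hae] at hmain
  have hgint := intervalIntegrable_deriv_of_lipschitz hg a b
  rw [intervalIntegral.integral_add (intervalIntegrable_const) hgint,
    intervalIntegral.integral_const] at hmain
  simp only [smul_eq_mul, hkdef] at hmain
  linarith

lemma caputoR_neg_of_min {αi t₀ : ℝ} {w : ℝ → ℝ} (hα : 0 < αi) (hα1 : αi < 1) (ht₀ : 0 < t₀)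
    (hmin : ∀ s ∈ Icc (0:ℝ) t₀, w t₀ ≤ w s) (h0 : w t₀ < w 0) :
    caputoR αi w t₀ < 0 := by
  have hΓ : 0 < Real.Gamma (1 - αi) := Real.Gamma_pos_of_pos (by linarith)
  have h1 : (0:ℝ) < 1 / Real.Gamma (1 - αi) := by positivity
  have hfirst : t₀ ^ (-αi) * (w t₀ - w 0) < 0 :=
    mul_neg_of_pos_of_neg (Real.rpow_pos_of_pos ht₀ _) (by linarith)
  have hI : (∫ s in (0:ℝ)..t₀, αi * (t₀ - s) ^ (-αi - 1) * (w t₀ - w s)) ≤ 0 := by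
    have hnonneg : (0:ℝ) ≤ ∫ s in (0:ℝ)..t₀, -(αi * (t₀ - s) ^ (-αi - 1) * (w t₀ - w s)) := by
      refine intervalIntegral.integral_nonneg ht₀.le (fun u hu => ?_)
      have hb : (0:ℝ) ≤ (t₀ - u) ^ (-αi - 1) := Real.rpow_nonneg (by linarith [hu.2]) _
      have hw := hmin u hu
      have h2 : -(αi * (t₀ - u) ^ (-αi - 1) * (w t₀ - w u))
          = αi * (t₀ - u) ^ (-αi - 1) * (w u - w t₀) := by ring
      rw [h2]
      exact mul_nonneg (mul_nonneg hα.le hb) (by linarith)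
    rw [intervalIntegral.integral_neg] at hnonneg
    linarith
  exact mul_neg_of_pos_of_neg h1 (by linarith)

end Aux

theorem comparison_principle_multiterm_IVP
    (T : ℝ) (hT : 0 < T)
    (ℓ : ℕ) (hℓ : 1 ≤ ℓ)
    (α : Fin ℓ → ℝ)
    (hα_pos : ∀ i, 0 < α i)
    (hα_le1 : ∀ i, α i ≤ 1)
    (hα_dec : ∀ i j : Fin ℓ, i < j → α j < α i)
    (q : Fin ℓ → ℝ → ℝ)
    (hq_cont : ∀ i, ContinuousOn (q i) (Icc 0 T))
    (hq_nonneg : ∀ i, ∀ t ∈ Icc (0:ℝ) T, 0 ≤ q i t)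
    (hq_sum : ∀ t ∈ Icc (0:ℝ) T, 0 < ∑ i, q i t)
    (lam : ℝ) (hlam : 0 ≤ lam)
    (v w : ℝ → ℝ)
    (hv : ∀ t ∈ Ioc (0:ℝ) T, 0 ≤ v t)
    (hw_cont : ContinuousOn w (Icc 0 T))
    (hw_lip : ∀ ε t : ℝ, 0 < ε → ε < t → t ≤ T →
      ∃ C : NNReal, LipschitzOnWith C w (Icc ε t))
    (hw'_leftcont : (∃ i, α i = 1) →
      ∀ t ∈ Ioc (0:ℝ) T,
        Filter.Tendsto (deriv w) (nhdsWithin t (Iio t)) (nhds (deriv w t)))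
    (hw0 : 0 ≤ w 0)
    (heq : ∀ t ∈ Ioc (0:ℝ) T,
      (∑ i, q i t * caputoD (α i) w t) + lam * w t = v t) :
    ∀ t ∈ Icc (0:ℝ) T, 0 ≤ w t := by
  have key : ∀ ε : ℝ, 0 < ε → ∀ t ∈ Icc (0:ℝ) T, 0 ≤ w t + ε * t := by
    intro ε hε
    by_contra hcon
    push_neg at hcon
    obtain ⟨t₁, ht₁, ht₁neg⟩ := hcon
    have hu_cont : ContinuousOn (fun t => w t + ε * t) (Icc 0 T) :=
      hw_cont.add (continuous_const.mul continuous_id).continuousOn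
    obtain ⟨t₀, ht₀mem, ht₀min⟩ :=
      isCompact_Icc.exists_isMinOn (nonempty_Icc.2 hT.le) hu_cont
    have hmin : ∀ s ∈ Icc (0:ℝ) T, w t₀ + ε * t₀ ≤ w s + ε * s :=
      fun s hs => isMinOn_iff.1 ht₀min s hs
    have hu0 : w t₀ + ε * t₀ < 0 := lt_of_le_of_lt (hmin t₁ ht₁) ht₁neg
    have ht₀pos : 0 < t₀ := by
      rcases ht₀mem.1.lt_or_eq with h | h
      · exact h
      · exfalso; rw [← h] at hu0; simp only [mul_zero] at hu0; linarith
    have ht₀T : t₀ ≤ T := ht₀mem.2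
    have hmem : t₀ ∈ Ioc (0:ℝ) T := ⟨ht₀pos, ht₀T⟩
    have ht₀Icc : t₀ ∈ Icc (0:ℝ) T := ⟨ht₀pos.le, ht₀T⟩
    have hkey : ∀ s ∈ Icc (0:ℝ) t₀, w t₀ + ε * (t₀ - s) ≤ w s := by
      intro s hs
      have := hmin s ⟨hs.1, hs.2.trans ht₀T⟩
      nlinarith
    have hwt₀neg : w t₀ < 0 := by nlinarith
    have hw0lt : w t₀ < w 0 := by
      have := hkey 0 ⟨le_rfl, ht₀pos.le⟩
      nlinarith
    have hminw : ∀ s ∈ Icc (0:ℝ) t₀, w t₀ ≤ w s := by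
      intro s hs
      have h1 := hkey s hs
      nlinarith [mul_nonneg hε.le (sub_nonneg.2 hs.2)]
    have hE := heq t₀ hmem
    have hderiv_le : DifferentiableAt ℝ w t₀ → deriv w t₀ ≤ -ε :=
      fun hd => deriv_le_neg_of_min ht₀pos hd hkey
    have hcapR_neg : ∀ i : Fin ℓ, α i < 1 → caputoR (α i) w t₀ < 0 :=
      fun i hi => caputoR_neg_of_min (hα_pos i) hi ht₀pos hminw hw0lt
    have hterm : ∀ i : Fin ℓ, q i t₀ * caputoD (α i) w t₀ ≤ 0 := by
      intro i
      apply mul_nonpos_of_nonneg_of_nonpos (hq_nonneg i t₀ ht₀Icc)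
      by_cases h1 : α i = 1
      · rw [caputoD, if_pos h1]
        by_cases hd : DifferentiableAt ℝ w t₀
        · linarith [hderiv_le hd]
        · rw [deriv_zero_of_not_differentiableAt hd]
      · rw [caputoD, if_neg h1]
        exact (hcapR_neg i (lt_of_le_of_ne (hα_le1 i) h1)).le
    have hlamw : lam * w t₀ ≤ 0 := mul_nonpos_of_nonneg_of_nonpos hlam hwt₀neg.le
    have hsum_ge : 0 ≤ ∑ i, q i t₀ * caputoD (α i) w t₀ := by
      have hv0 := hv t₀ hmem
      linarith
    have hall0 : ∀ i : Fin ℓ, q i t₀ * caputoD (α i) w t₀ = 0 := by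
      have hle := Finset.sum_nonpos (s := Finset.univ) (fun i _ => hterm i)
      have h0 : ∑ i, q i t₀ * caputoD (α i) w t₀ = 0 := le_antisymm hle hsum_ge
      exact fun i =>
        (Finset.sum_eq_zero_iff_of_nonpos (fun i _ => hterm i)).1 h0 i (Finset.mem_univ i)
    obtain ⟨j, hj⟩ : ∃ j : Fin ℓ, 0 < q j t₀ := by
      by_contra hno
      push_neg at hno
      exact absurd (hq_sum t₀ ht₀Icc) (not_lt.2 (Finset.sum_nonpos fun i _ => hno i))
    have hcap0 : caputoD (α j) w t₀ = 0 := by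
      rcases mul_eq_zero.1 (hall0 j) with h | h
      · exact absurd h hj.ne'
      · exact h
    have hαj : α j = 1 := by
      by_contra h1
      rw [caputoD, if_neg h1] at hcap0
      exact absurd hcap0 (hcapR_neg j (lt_of_le_of_ne (hα_le1 j) h1)).ne
    have hndiff : ¬ DifferentiableAt ℝ w t₀ := by
      intro hd
      rw [caputoD, if_pos hαj] at hcap0
      linarith [hderiv_le hd]
    have hderiv0 : deriv w t₀ = 0 := deriv_zero_of_not_differentiableAt hndiff
    have hlc := hw'_leftcont ⟨j, hαj⟩ t₀ hmem
    rw [hderiv0] at hlc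
    have hev : ∀ᶠ s in nhdsWithin t₀ (Iio t₀), |deriv w s| < ε / 2 := by
      have h2 := Metric.tendsto_nhds.1 hlc (ε / 2) (by positivity)
      filter_upwards [h2] with s hs
      simpa [Real.dist_eq] using hs
    rw [Filter.eventually_iff, mem_nhdsWithin] at hev
    obtain ⟨U, hUopen, hUt₀, hUsub⟩ := hev
    obtain ⟨δ, hδpos, hδsub⟩ := Metric.isOpen_iff.1 hUopen t₀ hUt₀
    set a := max (t₀ / 2) (t₀ - δ / 2) with ha
    have hapos : 0 < a := lt_max_of_lt_left (by positivity)
    have halt : a < t₀ := max_lt (by linarith) (by linarith)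
    have halow : t₀ / 2 ≤ a := le_max_left _ _
    have hbound : ∀ s ∈ Ioo a t₀, |deriv w s| < ε / 2 := by
      intro s hs
      refine hUsub ⟨hδsub ?_, hs.2⟩
      rw [Metric.mem_ball, Real.dist_eq, abs_of_neg (by linarith [hs.2] : s - t₀ < 0)]
      have h5 : t₀ - δ / 2 ≤ a := le_max_right _ _
      linarith [hs.1]
    obtain ⟨C, hC⟩ := hw_lip (t₀ / 2) t₀ (by positivity) (by linarith) ht₀T
    obtain ⟨g, hg_lip, hg_eq⟩ := hC.extend_real
    have hderiv_eq : ∀ s ∈ Ioo (t₀ / 2) t₀, deriv g s = deriv w s := by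
      intro s hs
      apply Filter.EventuallyEq.deriv_eq
      filter_upwards [Icc_mem_nhds hs.1 hs.2] with y hy
      exact (hg_eq hy).symm
    have hFTC := integral_deriv_le_of_lipschitz hg_lip halt.le
    have hgint := intervalIntegrable_deriv_of_lipschitz hg_lip a t₀
    have hlow : -(ε / 2) * (t₀ - a) ≤ ∫ s in a..t₀, deriv g s := by
      have hnn : (0:ℝ) ≤ ∫ s in a..t₀, (deriv g s + ε / 2) := by
        rw [intervalIntegral.integral_of_le halt.le]
        refine MeasureTheory.setIntegral_nonneg_ae measurableSet_Ioc ?_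
        have hne : ∀ᵐ x : ℝ ∂volume, x ≠ t₀ := by
          have hs : {x : ℝ | ¬ x ≠ t₀} = {t₀} := by ext x; simp
          rw [MeasureTheory.ae_iff, hs]
          exact measure_singleton t₀
        filter_upwards [hne] with x hx hxmem
        have hxo : x ∈ Ioo a t₀ := ⟨hxmem.1, lt_of_le_of_ne hxmem.2 hx⟩
        have hb := hbound x hxo
        have he2 := hderiv_eq x ⟨lt_of_le_of_lt halow hxo.1, hxo.2⟩
        rw [he2]
        have := abs_lt.1 hb
        linarith [this.1]
      have hadd : ∫ s in a..t₀, (deriv g s + ε / 2)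
          = (∫ s in a..t₀, deriv g s) + (ε / 2) * (t₀ - a) := by
        rw [intervalIntegral.integral_add hgint intervalIntegrable_const,
          intervalIntegral.integral_const]
        ring_nf
      rw [hadd] at hnn
      linarith
    have hga : g a = w a := (hg_eq ⟨halow, halt.le⟩).symm
    have hgt₀ : g t₀ = w t₀ := (hg_eq ⟨by linarith, le_rfl⟩).symm
    have hka := hkey a ⟨hapos.le, halt.le⟩
    rw [hga, hgt₀] at hFTC
    nlinarith [hFTC, hlow, hka, halt]
  intro t ht
  by_contra hneg
  push_neg at hneg
  set ε := -w t / (2 * (T + 1)) with hεdef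
  have hε : 0 < ε := div_pos (by linarith) (by linarith)
  have h1 : ε * t ≤ ε * T := mul_le_mul_of_nonneg_left ht.2 hε.le
  have h2 : ε * T < -w t / 2 := by
    rw [hεdef, div_mul_eq_mul_div, div_lt_div_iff₀ (by linarith) (by norm_num)]
    nlinarith
  linarith [key ε hε t ht]
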